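/- Let E, F be exact biadjoint functors between module categories of finite-dimensional algebras, and M a module with finite projective resolution P_•. If M is a direct summand of FE(M), then each projective term P_n of a minimal projective resolution of M is a direct summand of FE(P_n). -/

import Mathlib

open CategoryTheory Limits

/-- A projective resolution is minimal if each differential maps into the radical
`J(A)·P_{n-1}` of the next term. -/
def IsMinimalResolution {A : Type} [Ring A] {M : ModuleCat A}
    (P : ProjectiveResolution M) : Prop :=
  ∀ n : ℕ, LinearMap.range (P.complex.d (n + 1) n).hom ≤
    (⊥ : Ideal A).jacobson • (⊤ : Submodule A (P.complex.X n))

section JacAux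
variable {A : Type*} [Ring A]

lemma aux_left_inv {a : A} (ha : a ∈ (⊥ : Ideal A).jacobson) :
    ∃ z : A, z * (1 - a) = 1 := by
  obtain ⟨z, hz⟩ := Ideal.mem_jacobson_iff.mp ha (-1)
  rw [Ideal.mem_bot] at hz
  refine ⟨z, sub_eq_zero.mp ?_⟩
  have h : z * (1 - a) - 1 = z * -1 * a + z - 1 := by noncomm_ring
  exact h.trans hz

/-- The (left) Jacobson radical of `⊥` is closed under right multiplication. -/
lemma aux_jac_mul_right {x : A} (hx : x ∈ (⊥ : Ideal A).jacobson) (a : A) :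
    x * a ∈ (⊥ : Ideal A).jacobson := by
  rw [Ideal.mem_jacobson_iff] at hx ⊢
  intro y
  obtain ⟨z, hz⟩ := hx (a * y)
  rw [Ideal.mem_bot] at hz
  refine ⟨1 - (y * x) * z * a, ?_⟩
  rw [Ideal.mem_bot]
  have key : z * (a * (y * x)) + z = 1 := by
    have h : z * (a * (y * x)) + z = z * (a * y) * x + z - 1 + 1 := by noncomm_ring
    rw [h, hz]; rw [zero_add]
  have expand : (1 - (y * x) * z * a) * y * (x * a) + (1 - (y * x) * z * a) - 1 =
      (y * x) * a - (y * x) * (z * (a * (y * x)) + z) * a := by noncomm_ring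
  rw [expand, key]
  noncomm_ring

/-- Elements of `J • N` when `N = span (insert x s)`. -/
lemma aux_mem_smul_span_insert {M : Type*} [AddCommGroup M] [Module A M]
    {x : M} {s : Set M} {y : M}
    (hy : y ∈ (⊥ : Ideal A).jacobson • (Submodule.span A (insert x s))) :
    ∃ c ∈ (⊥ : Ideal A).jacobson, ∃ z ∈ Submodule.span A s, y = c • x + z := by
  refine Submodule.smul_induction_on hy ?_ ?_
  · intro r hr n hn
    obtain ⟨a, z, hz, rfl⟩ := Submodule.mem_span_insert.mp hn
    exact ⟨r * a, aux_jac_mul_right hr a, r • z, Submodule.smul_mem _ _ hz,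
      by rw [smul_add, smul_smul]⟩
  · rintro y₁ y₂ ⟨c₁, hc₁, z₁, hz₁, rfl⟩ ⟨c₂, hc₂, z₂, hz₂, rfl⟩
    exact ⟨c₁ + c₂, Ideal.add_mem _ hc₁ hc₂, z₁ + z₂, Submodule.add_mem _ hz₁ hz₂, by
      rw [add_smul]; abel⟩

/-- Nakayama's lemma for finitely generated modules over a possibly
noncommutative ring. -/
lemma aux_nakayama_fg {M : Type*} [AddCommGroup M] [Module A M]
    (N : Submodule A M) (hfg : N.FG)
    (hle : N ≤ (⊥ : Ideal A).jacobson • N) : N = ⊥ := by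
  obtain ⟨s, hs⟩ := hfg
  suffices H : ∀ (n : ℕ) (s : Finset M), s.card = n →
      Submodule.span A (s : Set M) ≤ (⊥ : Ideal A).jacobson • Submodule.span A (s : Set M) →
      Submodule.span A (s : Set M) = ⊥ by
    rw [← hs]; exact H s.card s rfl (by rwa [hs])
  classical
  intro n
  induction n with
  | zero =>
    intro s hcard _
    rw [Finset.card_eq_zero.mp hcard]
    simp
  | succ n ih =>
    intro s hcard hle
    obtain ⟨x, t, hxt, rfl, htc⟩ := Finset.card_eq_succ.mp hcard
    have hx : x ∈ Submodule.span A ((insert x t : Finset M) : Set M) :=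
      Submodule.subset_span (by simp)
    have hx' := hle hx
    rw [Finset.coe_insert] at hx' ⊢
    obtain ⟨c, hc, z, hz, hxe⟩ := aux_mem_smul_span_insert
        (by simpa using hx')
    obtain ⟨u, hu⟩ := aux_left_inv hc
    have hxz : (1 - c) • x = z := by
      rw [sub_smul, one_smul, sub_eq_iff_eq_add']
      exact hxe
    have hxmem : x ∈ Submodule.span A (t : Set M) := by
      have : x = u • ((1 - c) • x) := by rw [smul_smul, hu, one_smul]
      rw [this, hxz]
      exact Submodule.smul_mem _ _ hz
    have hspan : Submodule.span A (insert x (t : Set M)) = Submodule.span A (t : Set M) := by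
      refine le_antisymm (Submodule.span_le.mpr ?_) (Submodule.span_mono (Set.subset_insert _ _))
      rw [Set.insert_subset_iff]
      exact ⟨hxmem, Submodule.subset_span⟩
    refine hspan.trans (ih t htc ?_)
    rw [← hspan]
    simpa using hle
end JacAux

section Nilp

lemma aux_smul_sup_le {A : Type*} [Ring A] {P : Type*} [AddCommGroup P] [Module A P]
    (I : Ideal A) (N N' : Submodule A P) : I • (N ⊔ N') ≤ I • N ⊔ I • N' := by
  rw [Submodule.smul_le]
  intro r hr n hn
  obtain ⟨a, ha, b, hb, rfl⟩ := Submodule.mem_sup.mp hn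
  rw [smul_add]
  exact Submodule.add_mem _ (Submodule.mem_sup_left (Submodule.smul_mem_smul hr ha))
    (Submodule.mem_sup_right (Submodule.smul_mem_smul hr hb))

lemma aux_smul_smul_le {A : Type*} [Ring A] {P : Type*} [AddCommGroup P] [Module A P]
    (I Q : Ideal A) (T : Submodule A P) : I • (Q • T) ≤ (I • Q) • T := by
  rw [Submodule.smul_le]
  intro r hr y hy
  refine Submodule.smul_induction_on hy ?_ ?_
  · intro q hq t ht
    rw [← mul_smul]
    have hrq : r * q ∈ I • Q := by
      simpa [smul_eq_mul] using Submodule.smul_mem_smul hr hq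
    exact Submodule.smul_mem_smul hrq ht
  · intro y₁ y₂ h₁ h₂
    rw [smul_add]
    exact Submodule.add_mem _ h₁ h₂

lemma aux_jac_nilpotent (k : Type*) [Field k] {A : Type*} [Ring A] [Algebra k A]
    [FiniteDimensional k A] :
    ∃ n : ℕ, (fun I : Ideal A => (⊥ : Ideal A).jacobson • I)^[n] ⊤ = ⊥ := by
  set J := (⊥ : Ideal A).jacobson with hJ
  set f : Ideal A → Ideal A := fun I => J • I with hf
  have hstep : ∀ m, f^[m + 1] ⊤ ≤ f^[m] ⊤ := by
    intro m
    rw [Function.iterate_succ_apply']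
    exact Submodule.smul_le_right
  have hanti : Antitone fun m => f^[m] (⊤ : Ideal A) := antitone_nat_of_succ_le hstep
  haveI : IsNoetherian k A := IsNoetherian.iff_fg.mpr inferInstance
  let g : ℕ →o (Submodule k A)ᵒᵈ :=
    ⟨fun m => Submodule.restrictScalars k (f^[m] ⊤), fun a b hab x hx => hanti hab hx⟩
  obtain ⟨n, hn⟩ := IsArtinian.monotone_stabilizes g
  have heq : f^[n] ⊤ = f^[n + 1] ⊤ :=
    Submodule.restrictScalars_injective k _ _ (hn (n + 1) (by omega))
  refine ⟨n, aux_nakayama_fg _ ?_ ?_⟩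
  · exact Submodule.FG.of_restrictScalars k (IsNoetherian.noetherian _)
  · conv_lhs => rw [heq, Function.iterate_succ_apply']

lemma aux_nakayama_top {A : Type*} [Ring A]
    (hnil : ∃ n : ℕ, (fun I : Ideal A => (⊥ : Ideal A).jacobson • I)^[n] ⊤ = ⊥)
    {P : Type*} [AddCommGroup P] [Module A P] (N : Submodule A P)
    (h : ⊤ ≤ N ⊔ (⊥ : Ideal A).jacobson • (⊤ : Submodule A P)) : N = ⊤ := by
  obtain ⟨n, hn⟩ := hnil
  set J := (⊥ : Ideal A).jacobson with hJ
  set K : ℕ → Submodule A P := fun m => (fun T : Submodule A P => J • T)^[m] ⊤ with hK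
  have hKsucc : ∀ m, K (m + 1) = J • K m := by
    intro m
    rw [hK]
    simp only []
    rw [Function.iterate_succ_apply']
  have claim1 : ∀ m, (⊤ : Submodule A P) ≤ N ⊔ K m := by
    intro m
    induction m with
    | zero => simp [hK]
    | succ m ih =>
      have h2 : J • (⊤ : Submodule A P) ≤ N ⊔ K (m + 1) :=
        calc J • (⊤ : Submodule A P) ≤ J • (N ⊔ K m) := smul_mono_right _ ih
          _ ≤ J • N ⊔ J • K m := aux_smul_sup_le _ _ _
          _ ≤ N ⊔ K (m + 1) :=
            sup_le_sup Submodule.smul_le_right (le_of_eq (hKsucc m).symm)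
      calc (⊤ : Submodule A P) ≤ N ⊔ J • ⊤ := h
        _ ≤ N ⊔ (N ⊔ K (m + 1)) := sup_le_sup le_rfl h2
        _ = N ⊔ K (m + 1) := by rw [← sup_assoc, sup_idem]
  have claim2 : ∀ m, K m ≤ ((fun I : Ideal A => J • I)^[m] ⊤) • (⊤ : Submodule A P) := by
    intro m
    induction m with
    | zero => simp [hK, Submodule.top_smul]
    | succ m ih =>
      rw [hKsucc m, Function.iterate_succ_apply']
      calc J • K m ≤ J • (((fun I : Ideal A => J • I)^[m] ⊤) • (⊤ : Submodule A P)) :=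
            smul_mono_right _ ih
        _ ≤ (J • ((fun I : Ideal A => J • I)^[m] ⊤)) • (⊤ : Submodule A P) :=
            aux_smul_smul_le _ _ _
  have hKn : K n = ⊥ := by
    refine le_bot_iff.mp ?_
    refine (claim2 n).trans ?_
    rw [hn, Submodule.bot_smul]
  refine le_antisymm le_top ?_
  have := claim1 n
  rwa [hKn, sup_bot_eq] at this

end Nilp

section MapMem

lemma aux_map_mem {A M M' : Type*} [Ring A] [AddCommGroup M] [Module A M]
    [AddCommGroup M'] [Module A M'] (g : M →ₗ[A] M') {I : Ideal A} {x : M}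
    (hx : x ∈ I • (⊤ : Submodule A M)) : g x ∈ I • (⊤ : Submodule A M') := by
  refine Submodule.smul_induction_on hx ?_ ?_
  · intro r hr m _
    rw [map_smul]
    exact Submodule.smul_mem_smul hr trivial
  · intro a b ha hb
    rw [map_add]
    exact Submodule.add_mem _ ha hb

end MapMem


/-- Let `E`, `F` be exact biadjoint functors between the module categories
of finite-dimensional algebras `A`, `B` over a field `k`, and `M` an `A`-module with a
minimal finite projective resolution `P_•`. If `M` is a direct summand of `FE(M)`, then
each term `P_n` of the minimal resolution is a direct summand of `FE(P_n)`. -/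
theorem stmt_16 {k A B : Type} [Field k] [Ring A] [Algebra k A] [FiniteDimensional k A]
    [Ring B] [Algebra k B] [FiniteDimensional k B]
    (E : ModuleCat A ⥤ ModuleCat B) (F : ModuleCat B ⥤ ModuleCat A)
    [PreservesFiniteLimits E] [PreservesFiniteColimits E]
    [PreservesFiniteLimits F] [PreservesFiniteColimits F]
    (adj₁ : E ⊣ F) (adj₂ : F ⊣ E)
    (M : ModuleCat A) (hM : Module.Finite A M)
    (P : ProjectiveResolution M) (hmin : IsMinimalResolution P)
    (hfin : ∃ d : ℕ, ∀ n, d < n → IsZero (P.complex.X n))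
    (ι : M ⟶ F.obj (E.obj M)) (π : F.obj (E.obj M) ⟶ M) (hretract : ι ≫ π = 𝟙 M) :
    ∀ n : ℕ, ∃ (ιn : P.complex.X n ⟶ F.obj (E.obj (P.complex.X n)))
      (πn : F.obj (E.obj (P.complex.X n)) ⟶ P.complex.X n), ιn ≫ πn = 𝟙 (P.complex.X n) := by
  have hnil := aux_jac_nilpotent k (A := A)
  haveI : PreservesFiniteLimits (E ⋙ F) := comp_preservesFiniteLimits E F
  haveI : PreservesFiniteColimits (E ⋙ F) := comp_preservesFiniteColimits E F
  haveI : (E ⋙ F).Additive := Functor.additive_of_preserves_binary_products _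
  have hproj : ∀ n : ℕ, Projective ((E ⋙ F).obj (P.complex.X n)) :=
    fun n => (adj₁.comp adj₂).map_projective _ (P.projective n)
  let Q : ProjectiveResolution ((E ⋙ F).obj M) :=
    { complex := ((E ⋙ F).mapHomologicalComplex (ComplexShape.down ℕ)).obj P.complex
      projective := hproj
      hasHomology := fun i => inferInstance
      π := ((E ⋙ F).mapHomologicalComplex (ComplexShape.down ℕ)).map P.π ≫
        (HomologicalComplex.singleMapHomologicalComplex (E ⋙ F) (ComplexShape.down ℕ) 0).hom.app M
      quasiIso := inferInstance }
  let f : P.complex ⟶ Q.complex := ProjectiveResolution.lift ι P Q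
  let g : Q.complex ⟶ P.complex := ProjectiveResolution.lift π Q P
  have comm1 : (f ≫ g) ≫ P.π = P.π ≫ (ChainComplex.single₀ (ModuleCat A)).map (𝟙 M) := by
    rw [Category.assoc, ProjectiveResolution.lift_commutes, ← Category.assoc,
      ProjectiveResolution.lift_commutes, Category.assoc, ← Functor.map_comp, hretract]
  have comm2 : (𝟙 P.complex) ≫ P.π = P.π ≫ (ChainComplex.single₀ (ModuleCat A)).map (𝟙 M) := by
    simp
  let H : Homotopy (f ≫ g) (𝟙 P.complex) :=
    ProjectiveResolution.liftHomotopy (𝟙 M) _ _ comm1 comm2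
  intro n
  have key : ∀ x : P.complex.X n, ((f ≫ g).f n) x - x ∈
      (⊥ : Ideal A).jacobson • (⊤ : Submodule A (P.complex.X n)) := by
    intro x
    have hc : ((f ≫ g).f n) x = (dNext n H.hom) x + (prevD n H.hom) x + x := by
      rw [H.comm n]; rfl
    have mem1 : (dNext n H.hom) x ∈
        (⊥ : Ideal A).jacobson • (⊤ : Submodule A (P.complex.X n)) := by
      cases n with
      | zero =>
        rw [Homotopy.dNext_zero_chainComplex]
        exact Submodule.zero_mem _
      | succ m =>
        rw [dNext_eq H.hom (show (ComplexShape.down ℕ).Rel (m + 1) m by simp)]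
        have : (P.complex.d (m + 1) m ≫ H.hom m (m + 1)) x
            = (H.hom m (m + 1)) ((P.complex.d (m + 1) m) x) := rfl
        rw [this]
        exact aux_map_mem _ (hmin m ⟨x, rfl⟩)
    have mem2 : (prevD n H.hom) x ∈
        (⊥ : Ideal A).jacobson • (⊤ : Submodule A (P.complex.X n)) := by
      rw [prevD_eq H.hom (show (ComplexShape.down ℕ).Rel (n + 1) n by simp)]
      exact hmin n ⟨(H.hom n (n + 1)) x, rfl⟩
    rw [hc]
    have : (dNext n H.hom) x + (prevD n H.hom) x + x - x
        = (dNext n H.hom) x + (prevD n H.hom) x := by abel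
    rw [this]
    exact Submodule.add_mem _ mem1 mem2
  have hsub : (⊤ : Submodule A (P.complex.X n)) ≤ LinearMap.range ((f ≫ g).f n).hom ⊔
      (⊥ : Ideal A).jacobson • (⊤ : Submodule A (P.complex.X n)) := by
    intro x _
    have hx : x = ((f ≫ g).f n) x - (((f ≫ g).f n) x - x) := by abel
    rw [hx]
    exact Submodule.sub_mem _ (Submodule.mem_sup_left ⟨x, rfl⟩)
      (Submodule.mem_sup_right (key x))
  have hrange : LinearMap.range ((f ≫ g).f n).hom = ⊤ := aux_nakayama_top hnil _ hsub
  haveI : Epi ((f ≫ g).f n) :=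
    (ModuleCat.epi_iff_surjective _).mpr (LinearMap.range_eq_top.mp hrange)
  haveI := P.projective n
  refine ⟨Projective.factorThru (𝟙 _) ((f ≫ g).f n) ≫ f.f n, g.f n, ?_⟩
  have h1 := Projective.factorThru_comp (𝟙 (P.complex.X n)) ((f ≫ g).f n)
  exact (Category.assoc _ _ _).trans
    ((congrArg (Projective.factorThru (𝟙 (P.complex.X n)) ((f ≫ g).f n) ≫ ·)
      (HomologicalComplex.comp_f f g n).symm).trans h1)
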